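/- For an infinite cardinal α, the space (S^α)_1, defined as the set {0,1}^α equipped with the join (supremum) of the product topology from S^α and the cofinite topology, is an α-sequential T1 space. -/

import Mathlib

open Filter Topology

universe u

/-- The two points of the Sierpiński space. -/
inductive SPt : Type
  | zero
  | one
deriving DecidableEq

/-- The Sierpiński topology: `{zero}` is open, `{one}` is not. -/
instance : TopologicalSpace SPt := TopologicalSpace.generateFrom {{SPt.zero}}

/-- `A` is closed under limits of `o`-indexed transfinite sequences for all infinite
ordinals `o ≤ β` (β an infinite cardinal, viewed as an ordinal). -/
def OrdSeqClosed {X : Type u} [TopologicalSpace X] (β : Cardinal.{u}) (A : Set X) : Prop :=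
  ∀ o : Ordinal.{u}, Ordinal.omega0 ≤ o → o ≤ β.ord →
    ∀ f : o.ToType → X, (∀ i, f i ∈ A) →
    ∀ x : X, Filter.Tendsto f Filter.atTop (nhds x) → x ∈ A

/-- A space is β-sequential if every such subset is closed. -/
def IsBetaSequential (X : Type u) [TopologicalSpace X] (β : Cardinal.{u}) : Prop :=
  ∀ A : Set X, OrdSeqClosed β A → IsClosed A

/-- `A` contains limits of all convergent transfinite sequences of its points. -/
def TransSeqClosed {X : Type u} [TopologicalSpace X] (A : Set X) : Prop :=
  ∀ o : Ordinal.{u}, Ordinal.omega0 ≤ o →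
    ∀ f : o.ToType → X, (∀ i, f i ∈ A) →
    ∀ x : X, Filter.Tendsto f Filter.atTop (nhds x) → x ∈ A

/-- Pseudoradial space. -/
def IsPseudoradial (X : Type u) [TopologicalSpace X] : Prop :=
  ∀ A : Set X, TransSeqClosed A → IsClosed A

/-- The cofinite topology on a type. -/
def cofiniteTopology (Y : Type u) : TopologicalSpace Y :=
  @TopologicalSpace.cofinite Y

open Set Cardinal

lemma spt_open_zero : IsOpen ({SPt.zero} : Set SPt) :=
  TopologicalSpace.GenerateOpen.basic _ rfl

lemma spt_univ_of_open {s : Set SPt} (h : IsOpen s) : SPt.one ∈ s → s = Set.univ := by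
  induction h with
  | basic t ht =>
    rw [Set.mem_singleton_iff.1 ht]
    intro h1
    exact absurd h1 (by simp)
  | univ => intro _; rfl
  | inter s t _ _ ihs iht =>
    rintro ⟨h1, h2⟩
    rw [ihs h1, iht h2, Set.univ_inter]
  | sUnion S _ ih =>
    rintro ⟨t, htS, hone⟩
    apply Set.eq_univ_of_univ_subset
    rw [← ih t htS hone]
    exact Set.subset_sUnion_of_mem htS

lemma spt_nhds_one : 𝓝 SPt.one = ⊤ := by
  refine le_antisymm le_top ?_
  intro s hs
  rcases mem_nhds_iff.1 hs with ⟨t, hts, hto, h1⟩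
  rw [Filter.mem_top]
  exact Set.eq_univ_of_univ_subset ((spt_univ_of_open hto h1) ▸ hts)

lemma spt_nhds_zero : 𝓝 SPt.zero = 𝓟 {SPt.zero} := by
  refine le_antisymm (le_principal_iff.2 (spt_open_zero.mem_nhds rfl)) ?_
  intro s hs
  rw [Filter.mem_principal]
  intro y hy
  rw [Set.mem_singleton_iff.1 hy]
  exact mem_of_mem_nhds hs

section Joint

variable {J : Type u}

lemma mem_closure_nonempty {X : Type*} (t : TopologicalSpace X) {A : Set X} {x : X}
    (hx : x ∈ @closure X t A) {U : Set X} (hU : U ∈ @nhds X t x) : (U ∩ A).Nonempty := by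
  letI := t
  exact mem_closure_iff_nhds.1 hx U hU

lemma isClosed_of_closure_subset' {X : Type*} (t : TopologicalSpace X) {s : Set X}
    (h : @closure X t s ⊆ s) : @IsClosed X t s := by
  letI := t
  exact isClosed_of_closure_subset h

lemma singleton_closed_cof {Y : Type*} (y : Y) : @IsClosed Y (cofiniteTopology Y) {y} := by
  exact @IsClosed.mk Y (cofiniteTopology Y) _ (fun _ => (by rw [compl_compl]; exact Set.finite_singleton y : ({y}ᶜᶜ : Set Y).Finite))

lemma mem_closure_of {X : Type*} (t : TopologicalSpace X) {A : Set X} {x : X}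
    (h : ∀ U ∈ @nhds X t x, (U ∩ A).Nonempty) : x ∈ @closure X t A := by
  letI := t
  exact mem_closure_iff_nhds.2 h

lemma cof_nhds (x : J → SPt) :
    @nhds _ (cofiniteTopology (J → SPt)) x = pure x ⊔ Filter.cofinite := by
  letI : TopologicalSpace (J → SPt) := cofiniteTopology (J → SPt)
  ext U
  simp_rw [_root_.mem_nhds_iff]
  constructor
  · rintro ⟨V, hVU, V_op, haV⟩
    exact mem_sup.mpr ⟨hVU haV, mem_of_superset (V_op ⟨_, haV⟩) hVU⟩
  · rintro ⟨hU : x ∈ U, hU' : Uᶜ.Finite⟩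
    exact ⟨U, Subset.rfl, fun _ => hU', hU⟩

/-- eventual non-equality for injective nets over orders with no max -/
lemma eventually_ne_of_injective {T β : Type*} [LinearOrder T] [Nonempty T] [NoMaxOrder T]
    {f : T → β} (hf : Function.Injective f) (y : β) : ∀ᶠ j in atTop, f j ≠ y := by
  by_cases h : ∃ j1, f j1 = y
  · obtain ⟨j1, rfl⟩ := h
    obtain ⟨j2, hj2⟩ := exists_gt j1
    refine eventually_atTop.2 ⟨j2, fun j hj heq => ?_⟩
    exact absurd (hf heq) (ne_of_gt (lt_of_lt_of_le hj2 hj))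
  · exact Eventually.of_forall fun j hj => h ⟨j, hj⟩

lemma tendsto_joint {T : Type*} [Preorder T] (f : T → (J → SPt)) (x : J → SPt)
    (h1 : ∀ i, x i = SPt.zero → ∀ᶠ j in atTop, f j i = SPt.zero)
    (h2 : ∀ y, y ≠ x → ∀ᶠ j in atTop, f j ≠ y) :
    Tendsto f atTop
      (@nhds _ (Pi.topologicalSpace ⊓ cofiniteTopology (J → SPt)) x) := by
  rw [_root_.nhds_inf, tendsto_inf]
  constructor
  · rw [tendsto_pi_nhds]
    intro i
    cases hxi : x i with
    | zero =>
      rw [spt_nhds_zero, tendsto_principal]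
      exact (h1 i hxi).mono fun j hj => hj
    | one =>
      rw [spt_nhds_one]
      exact le_top
  · rw [cof_nhds]
    rw [Filter.tendsto_def]
    intro s hs
    rw [Filter.mem_sup] at hs
    obtain ⟨hpx, hcof⟩ := hs
    rw [Filter.mem_pure] at hpx
    have hev : ∀ᶠ j in atTop, ∀ y ∈ sᶜ, f j ≠ y :=
      (Filter.eventually_all_finite hcof).2 fun y hy => h2 y (fun h => hy (h ▸ hpx))
    filter_upwards [hev] with j hj
    by_contra hfs
    exact hj (f j) hfs rfl

lemma mem_nhds_basic {x : J → SPt} {U : Set (J → SPt)}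
    (hU : U ∈ @nhds _ (Pi.topologicalSpace ⊓ cofiniteTopology (J → SPt)) x) :
    ∃ F : Set J, F.Finite ∧ (∀ i ∈ F, x i = SPt.zero) ∧
      ∃ E : Set (J → SPt), E.Finite ∧
        ∀ y, (∀ i ∈ F, y i = SPt.zero) → y ∉ E → y ∈ U := by
  rw [_root_.nhds_inf, Filter.mem_inf_iff] at hU
  obtain ⟨V, hV, W, hW, rfl⟩ := hU
  rw [nhds_pi, Filter.mem_pi] at hV
  obtain ⟨F0, hF0fin, tset, htmem, hsub⟩ := hV
  rw [cof_nhds, Filter.mem_sup] at hW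
  obtain ⟨hxW, hWc⟩ := hW
  rw [Filter.mem_pure] at hxW
  rw [Filter.mem_cofinite] at hWc
  refine ⟨{i ∈ F0 | x i = SPt.zero}, hF0fin.subset (Set.sep_subset _ _),
    fun i hi => hi.2, Wᶜ, hWc, fun y hyF hyW => ?_⟩
  refine ⟨hsub ?_, not_not.1 hyW⟩
  intro i hi
  cases hxi : x i with
  | zero =>
    have : y i = SPt.zero := hyF i ⟨hi, hxi⟩
    rw [this]
    have := htmem i
    rw [hxi, spt_nhds_zero, Filter.mem_principal] at this
    exact this rfl
  | one =>
    have := htmem i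
    rw [hxi, spt_nhds_one, Filter.mem_top] at this
    rw [this]
    trivial

lemma fresh {A : Set (J → SPt)} {x : J → SPt}
    (hx : x ∈ @closure _ (Pi.topologicalSpace ⊓ cofiniteTopology (J → SPt)) A)
    (hxA : x ∉ A) {F : Set J} (hF : F.Finite) (hFz : ∀ i ∈ F, x i = SPt.zero)
    {E : Set (J → SPt)} (hE : E.Finite) :
    ∃ a ∈ A, a ∉ E ∧ ∀ i ∈ F, a i = SPt.zero := by
  have hU : {y : J → SPt | ∀ i ∈ F, y i = SPt.zero} ∩ (E \ {x})ᶜ ∈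
      @nhds _ (Pi.topologicalSpace ⊓ cofiniteTopology (J → SPt)) x := by
    rw [_root_.nhds_inf]
    refine Filter.inter_mem (Filter.mem_inf_of_left ?_) (Filter.mem_inf_of_right ?_)
    · have heq : {y : J → SPt | ∀ i ∈ F, y i = SPt.zero} = Set.pi F (fun _ => {SPt.zero}) := by
        ext y; simp [Set.mem_pi]
      rw [heq]
      exact (isOpen_set_pi hF fun i _ => spt_open_zero).mem_nhds
        (fun i hi => hFz i hi)
    · rw [cof_nhds, Filter.mem_sup]
      constructor
      · rw [Filter.mem_pure]
        exact fun h => h.2 rfl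
      · rw [Filter.mem_cofinite, compl_compl]
        exact hE.subset diff_subset
  obtain ⟨a, ⟨haz, haE⟩, haA⟩ := mem_closure_nonempty _ hx hU
  have hax : a ≠ x := fun h => hxA (h ▸ haA)
  exact ⟨a, haA, fun hE' => haE ⟨hE', hax⟩, haz⟩

end Joint

/-- `(S^α)_1`, i.e. `{0,1}^α` with the join of the product topology and the
cofinite topology (the coarsest topology finer than both, which is `⊓` in Mathlib's order
on `TopologicalSpace`), is an α-sequential T1 space. -/
theorem sierpinski_power_one_alpha_sequential_t1 (α : Cardinal.{u})
    (hα : Cardinal.aleph0 ≤ α) :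
    @IsBetaSequential (α.ord.ToType → SPt)
      (Pi.topologicalSpace ⊓ cofiniteTopology (α.ord.ToType → SPt)) α ∧
    @T1Space (α.ord.ToType → SPt)
      (Pi.topologicalSpace ⊓ cofiniteTopology (α.ord.ToType → SPt)) := by
  classical
  constructor
  · intro A hA
    refine isClosed_of_closure_subset' _ ?_
    suffices key : ∀ c : Cardinal.{u}, ∀ x : α.ord.ToType → SPt,
        x ∈ @closure _ (Pi.topologicalSpace ⊓ cofiniteTopology (α.ord.ToType → SPt)) A →
        #{i // x i = SPt.zero} = c → x ∈ A by
      intro x hx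
      exact key _ x hx rfl
    intro c
    refine WellFounded.induction Cardinal.lt_wf
      (C := fun c => ∀ x : α.ord.ToType → SPt,
        x ∈ @closure _ (Pi.topologicalSpace ⊓ cofiniteTopology (α.ord.ToType → SPt)) A →
        #{i // x i = SPt.zero} = c → x ∈ A) c ?_
    intro c IH x hxcl hxc
    by_cases hxA : x ∈ A
    · exact hxA
    by_cases hfin : {i | x i = SPt.zero}.Finite
    · -- Z finite : pick an injective ω-sequence in A vanishing on Z
      have hTinf : {a : α.ord.ToType → SPt |
          a ∈ A ∧ ∀ i ∈ {i | x i = SPt.zero}, a i = SPt.zero}.Infinite := by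
        intro hTfin
        obtain ⟨a, haA, haT, haz⟩ := fresh hxcl hxA hfin (fun i hi => hi) hTfin
        exact haT ⟨haA, haz⟩
      have emb := Set.Infinite.natEmbedding _ hTinf
      haveI : NoMaxOrder (Ordinal.omega0.{u}).ToType :=
        Ordinal.toType_noMax_of_succ_lt fun a h => Ordinal.isSuccLimit_omega0.succ_lt h
      haveI : Nonempty (Ordinal.omega0.{u}).ToType :=
        Ordinal.toType_nonempty_iff_ne_zero.2 Ordinal.omega0_ne_zero
      have isoN : ℕ ≃o Set.Iio Ordinal.omega0.{u} :=
        StrictMono.orderIsoOfSurjective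
          (fun n => ⟨(n : Ordinal), Ordinal.nat_lt_omega0 n⟩)
          (fun a b h => Subtype.mk_lt_mk.2 (Nat.cast_lt.2 h))
          (fun b => by
            obtain ⟨n, hn⟩ := Ordinal.lt_omega0.1 b.2
            exact ⟨n, Subtype.ext hn.symm⟩)
      have e : ℕ ≃o (Ordinal.omega0.{u}).ToType :=
        isoN.trans (Ordinal.ToType.mk)
      set f : (Ordinal.omega0.{u}).ToType → (α.ord.ToType → SPt) :=
        fun j => (emb (e.symm j) : α.ord.ToType → SPt) with hf
      have hfmem : ∀ j, f j ∈ A := fun j => (emb (e.symm j)).2.1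
      have hfinj : Function.Injective f := by
        intro a b hab
        exact e.symm.injective (emb.injective (Subtype.ext hab))
      refine hA Ordinal.omega0 le_rfl
        (by rw [← Cardinal.ord_aleph0]; exact Cardinal.ord_le_ord.2 hα) f hfmem x ?_
      apply tendsto_joint
      · intro i hi
        exact Filter.Eventually.of_forall fun j => (emb (e.symm j)).2.2 i hi
      · intro y hy
        exact eventually_ne_of_injective hfinj y
    · -- Z infinite
      have hcZ : #(↥{i | x i = SPt.zero}) = c := hxc
      have hc : Cardinal.aleph0 ≤ c := by
        rw [← hcZ]
        exact Cardinal.infinite_iff.1 (Set.infinite_coe_iff.2 hfin)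
      have hcα : c ≤ α := by
        rw [← hcZ]
        exact (Cardinal.mk_set_le _).trans_eq (Cardinal.mk_ord_toType α)
      have ho1 : Ordinal.omega0 ≤ c.ord := by
        rw [← Cardinal.ord_aleph0]; exact Cardinal.ord_le_ord.2 hc
      have ho2 : c.ord ≤ α.ord := Cardinal.ord_le_ord.2 hcα
      haveI : Nonempty c.ord.ToType := by
        refine Ordinal.toType_nonempty_iff_ne_zero.2 fun h0 => Ordinal.omega0_ne_zero ?_
        rw [h0] at ho1
        exact nonpos_iff_eq_zero.1 ho1
      haveI : NoMaxOrder c.ord.ToType := Cardinal.noMaxOrder hc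
      have heq : #(c.ord.ToType) = #(↥{i | x i = SPt.zero}) := by
        rw [Cardinal.mk_ord_toType, hcZ]
      obtain ⟨e⟩ := Cardinal.eq.1 heq
      set g : c.ord.ToType → α.ord.ToType := fun k => (e k : α.ord.ToType) with hg
      have hginj : Function.Injective g := fun a b hab => e.injective (Subtype.ext hab)
      have hgZ : ∀ k, x (g k) = SPt.zero := fun k => (e k).2
      set xj : c.ord.ToType → α.ord.ToType → SPt :=
        fun j i => if ∃ k ≤ j, g k = i then SPt.zero else SPt.one with hxj
      have hzero : ∀ j i, xj j i = SPt.zero ↔ ∃ k ≤ j, g k = i := by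
        intro j i
        by_cases h : ∃ k ≤ j, g k = i <;> simp [hxj, h]
      have hsmall : ∀ j, #{i // xj j i = SPt.zero} < c := by
        intro j
        obtain ⟨j', hj'⟩ := exists_gt j
        have hsub : {i | xj j i = SPt.zero} ⊆ g '' Set.Iic j := by
          intro i hi
          obtain ⟨k, hk, hki⟩ := (hzero j i).1 hi
          exact ⟨k, hk, hki⟩
        calc #{i // xj j i = SPt.zero}
            ≤ #(↥(g '' Set.Iic j)) := Cardinal.mk_le_mk_of_subset hsub
          _ ≤ #(↥(Set.Iic j)) := Cardinal.mk_image_le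
          _ ≤ #(↥(Set.Iio j')) :=
              Cardinal.mk_le_mk_of_subset (fun y hy => lt_of_le_of_lt hy hj')
          _ < c := Cardinal.mk_Iio_ord_toType j'
      have hclos : ∀ j, xj j ∈
          @closure _ (Pi.topologicalSpace ⊓ cofiniteTopology (α.ord.ToType → SPt)) A := by
        intro j
        apply mem_closure_of
        intro U hU
        obtain ⟨F, hFfin, hFz, E, hEfin, hsubU⟩ := mem_nhds_basic hU
        have hFx : ∀ i ∈ F, x i = SPt.zero := by
          intro i hi
          obtain ⟨k, _, hk⟩ := (hzero j i).1 (hFz i hi)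
          rw [← hk]; exact hgZ k
        obtain ⟨a, haA, haE, haz⟩ := fresh hxcl hxA hFfin hFx hEfin
        exact ⟨a, hsubU a haz haE, haA⟩
      have hmem : ∀ j, xj j ∈ A := fun j => IH _ (hsmall j) (xj j) (hclos j) rfl
      have hxjinj : Function.Injective xj := by
        have key2 : ∀ a b, a < b → xj a ≠ xj b := by
          intro a b hab hEq
          have h1 : xj b (g b) = SPt.zero := (hzero b (g b)).2 ⟨b, le_rfl, rfl⟩
          have h2 : xj a (g b) ≠ SPt.zero := by
            intro h
            obtain ⟨k, hk, hkb⟩ := (hzero a (g b)).1 h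
            rw [hginj hkb] at hk
            exact absurd hab (not_lt.2 hk)
          exact h2 (by rw [hEq]; exact h1)
        intro a b hab
        rcases lt_trichotomy a b with h | h | h
        · exact absurd hab (key2 a b h)
        · exact h
        · exact absurd hab.symm (key2 b a h)
      refine hA c.ord ho1 ho2 xj hmem x ?_
      apply tendsto_joint
      · intro i hi
        refine Filter.eventually_atTop.2 ⟨e.symm ⟨i, hi⟩, fun j hj => ?_⟩
        refine (hzero j i).2 ⟨e.symm ⟨i, hi⟩, hj, ?_⟩
        show (e (e.symm ⟨i, hi⟩) : α.ord.ToType) = i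
        rw [Equiv.apply_symm_apply]
      · intro y hy
        exact eventually_ne_of_injective hxjinj y
  · exact t1Space_antitone inf_le_right
      (@T1Space.mk _ (cofiniteTopology _) fun x => singleton_closed_cof x)
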